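/- Let K_1, K_2 be convex bodies in ℝ^n and let L_1, L_2 ≥ 0. Assume every closed polygon in 𝒫⁺(K_1) has length ≥ L_1 and every closed polygon in 𝒫⁺(K_2) has length ≥ L_2. Then every closed polygon in 𝒫⁺(K_1 + K_2) has length ≥ L_1 + L_2. -/
import Mathlib


open scoped RealInnerProductSpace Pointwise
open Metric

noncomputable section

/-- Euclidean space ℝ^n. -/
abbrev Euc (n : ℕ) := EuclideanSpace ℝ (Fin n)

/-- The image of a closed polygon with vertices `q 0, …, q (m-1)` (indices mod `m`):
the union of the segments `[q i, q (i+1)]`. -/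
def polyImage {n m : ℕ} [NeZero m] (q : Fin m → Euc n) : Set (Euc n) :=
  ⋃ i : Fin m, segment ℝ (q i) (q (i + 1))

/-- The length of a closed polygon: `∑ i, ‖q (i+1) - q i‖`. -/
noncomputable def polyLength {n m : ℕ} [NeZero m] (q : Fin m → Euc n) : ℝ :=
  ∑ i : Fin m, ‖q (i + 1) - q i‖

/-- A convex body: a compact convex set with nonempty interior. -/
def IsConvexBody {n : ℕ} (K : Set (Euc n)) : Prop :=
  IsCompact K ∧ Convex ℝ K ∧ (interior K).Nonempty

/-- A closed polygon belongs to `𝒫⁺(K)` if no translate of its image is contained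
in the interior of `K`. -/
def InPPlus {n m : ℕ} [NeZero m] (K : Set (Euc n)) (q : Fin m → Euc n) : Prop :=
  ∀ x : Euc n, ¬ ((fun p => p + x) '' polyImage q ⊆ interior K)

/-- Unit direction of the `i`-th edge of a closed polygon. -/
noncomputable def dir {n m : ℕ} [NeZero m] (q : Fin m → Euc n) (i : Fin m) : Euc n :=
  ‖q (i + 1) - q i‖⁻¹ • (q (i + 1) - q i)

/-- Outer normal `ν i = u (i-1) - u i` at the `i`-th vertex. -/
noncomputable def normalVec {n m : ℕ} [NeZero m] (q : Fin m → Euc n) (i : Fin m) : Euc n :=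
  dir q (i - 1) - dir q i

/-- A periodic billiard trajectory on a convex body `K`. -/
def IsBilliard {n m : ℕ} [NeZero m] (K : Set (Euc n)) (q : Fin m → Euc n) : Prop :=
  2 ≤ m ∧ (∀ i, q (i + 1) ≠ q i) ∧ (∀ i, q i ∈ K) ∧
    ∀ i, normalVec q i ≠ 0 ∧ ∀ x ∈ K, ⟪x - q i, normalVec q i⟫ ≤ 0

lemma interior_add_interior_subset {n : ℕ} (K₁ K₂ : Set (Euc n)) :
    interior K₁ + interior K₂ ⊆ interior (K₁ + K₂) :=
  interior_maximal (Set.add_subset_add interior_subset interior_subset)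
    (IsOpen.add_left isOpen_interior)

lemma smul_mem_polyImage {n m : ℕ} [NeZero m] (c : ℝ) (q : Fin m → Euc n) {p : Euc n}
    (hp : p ∈ polyImage q) : c • p ∈ polyImage (fun i => c • q i) := by
  obtain ⟨S, ⟨i, rfl⟩, hpS⟩ := hp
  obtain ⟨a, b, ha, hb, hab, rfl⟩ := hpS
  refine Set.mem_iUnion.2 ⟨i, ⟨a, b, ha, hb, hab, ?_⟩⟩
  simp only [smul_add, smul_comm c a, smul_comm c b]

lemma polyLength_smul {n m : ℕ} [NeZero m] (c : ℝ) (hc : 0 ≤ c) (q : Fin m → Euc n) :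
    polyLength (fun i => c • q i) = c * polyLength q := by
  unfold polyLength
  rw [Finset.mul_sum]
  refine Finset.sum_congr rfl fun i _ => ?_
  rw [← smul_sub, norm_smul, Real.norm_eq_abs, abs_of_nonneg hc]

lemma fit_of_lt {n m : ℕ} [NeZero m] {K : Set (Euc n)} {L : ℝ}
    (h : ∀ (m' : ℕ) [NeZero m'] (q' : Fin m' → Euc n), InPPlus K q' → L ≤ polyLength q')
    {q : Fin m → Euc n} (hlen : polyLength q < L) :
    ∃ x, (fun p => p + x) '' polyImage q ⊆ interior K := by
  by_contra hc
  rw [not_exists] at hc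
  exact absurd (h m q hc) (not_le.2 hlen)

lemma inPPlus_of_add_left {n m : ℕ} [NeZero m] {K₁ K₂ : Set (Euc n)}
    (hne : (interior K₁).Nonempty) {q : Fin m → Euc n}
    (hq : InPPlus (K₁ + K₂) q) : InPPlus K₂ q := by
  intro x hx
  obtain ⟨p, hp⟩ := hne
  apply hq (x + p)
  rintro _ ⟨y, hy, rfl⟩
  have h2 : p + (y + x) ∈ interior (K₁ + K₂) :=
    interior_add_interior_subset K₁ K₂ (Set.add_mem_add hp (hx ⟨y, hy, rfl⟩))
  have heq : y + (x + p) = p + (y + x) := by abel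
  show y + (x + p) ∈ interior (K₁ + K₂)
  rw [heq]; exact h2

theorem stmt3 {n : ℕ} (K₁ K₂ : Set (Euc n))
    (hK₁ : IsConvexBody K₁) (hK₂ : IsConvexBody K₂)
    (L₁ L₂ : ℝ) (hL₁ : 0 ≤ L₁) (hL₂ : 0 ≤ L₂)
    (h₁ : ∀ (m : ℕ) [NeZero m] (q : Fin m → Euc n), InPPlus K₁ q → L₁ ≤ polyLength q)
    (h₂ : ∀ (m : ℕ) [NeZero m] (q : Fin m → Euc n), InPPlus K₂ q → L₂ ≤ polyLength q) :
    ∀ (m : ℕ) [NeZero m] (q : Fin m → Euc n),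
      InPPlus (K₁ + K₂) q → L₁ + L₂ ≤ polyLength q := by
  intro m _ q hq
  by_contra hlt
  push_neg at hlt
  by_cases h10 : L₁ ≤ 0
  · have := h₂ m q (inPPlus_of_add_left hK₁.2.2 hq)
    linarith
  by_cases h20 : L₂ ≤ 0
  · have hq' : InPPlus (K₂ + K₁) q := by rwa [add_comm K₁ K₂] at hq
    have := h₁ m q (inPPlus_of_add_left hK₂.2.2 hq')
    linarith
  push_neg at h10 h20
  have hS : 0 < L₁ + L₂ := by linarith
  set c : ℝ := L₁ / (L₁ + L₂) with hcdef
  have hc0 : 0 < c := div_pos h10 hS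
  have hc1 : c < 1 := by
    rw [hcdef, div_lt_one hS]; linarith
  have hcS : c * (L₁ + L₂) = L₁ := div_mul_cancel₀ _ (ne_of_gt hS)
  have hcS' : (1 - c) * (L₁ + L₂) = L₂ := by
    rw [sub_mul, one_mul, hcS]; ring
  have hlen1 : polyLength (fun i => c • q i) < L₁ := by
    rw [polyLength_smul c (le_of_lt hc0), ← hcS]
    exact mul_lt_mul_of_pos_left hlt hc0
  have hlen2 : polyLength (fun i => (1 - c) • q i) < L₂ := by
    rw [polyLength_smul (1 - c) (by linarith), ← hcS']
    exact mul_lt_mul_of_pos_left hlt (by linarith)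
  obtain ⟨x₁, hx₁⟩ := fit_of_lt h₁ hlen1
  obtain ⟨x₂, hx₂⟩ := fit_of_lt h₂ hlen2
  apply hq (x₁ + x₂)
  rintro _ ⟨p, hp, rfl⟩
  have m1 : c • p + x₁ ∈ interior K₁ := hx₁ ⟨c • p, smul_mem_polyImage c q hp, rfl⟩
  have m2 : (1 - c) • p + x₂ ∈ interior K₂ :=
    hx₂ ⟨(1 - c) • p, smul_mem_polyImage (1 - c) q hp, rfl⟩
  have hmem : (c • p + x₁) + ((1 - c) • p + x₂) ∈ interior (K₁ + K₂) :=
    interior_add_interior_subset K₁ K₂ (Set.add_mem_add m1 m2)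
  have heq : p + (x₁ + x₂) = (c • p + x₁) + ((1 - c) • p + x₂) := by
    have hp' : c • p + (1 - c) • p = p := by
      rw [← add_smul]; simp
    calc p + (x₁ + x₂) = (c • p + (1 - c) • p) + (x₁ + x₂) := by rw [hp']
    _ = (c • p + x₁) + ((1 - c) • p + x₂) := by abel
  show p + (x₁ + x₂) ∈ interior (K₁ + K₂)
  rw [heq]; exact hmem
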